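/- arXiv:1505.05840 — 3 statements merged into one kernel-verified Lean document; each statement's English description precedes it below -/
import Mathlib

section
/- One step of two-sided Jacobi's method does not increase the off-diagonal Frobenius norm: if J is the Jacobi rotation in the (j,k) plane chosen to zero out entries (j,k) and (k,j) of symmetric A, then off(JᵀAJ)² = off(A)² − 2A(j,k)², where off(M)² denotes the sum of squares of the off-diagonal entries of M. -/
open Matrix

private lemma sum_two_aux {n : ℕ} {j k : Fin n} (hjk : j ≠ k) (X Y : ℝ) :
    (∑ b : Fin n, if b = j then X else if b = k then Y else 0) = X + Y := by
  classical
  rw [← Finset.sum_subset (Finset.subset_univ ({j, k} : Finset (Fin n)))]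
  · rw [Finset.sum_pair hjk]
    simp [hjk, hjk.symm]
  · intro b _ hb
    simp only [Finset.mem_insert, Finset.mem_singleton] at hb
    push_neg at hb
    simp [hb.1, hb.2]

private lemma sum_diff_two {n : ℕ} {j k : Fin n} (hjk : j ≠ k) (f g : Fin n → ℝ)
    (h : ∀ p, p ≠ j → p ≠ k → f p = g p) :
    ∑ p : Fin n, f p = (∑ p : Fin n, g p) + ((f j - g j) + (f k - g k)) := by
  have key : ∑ p : Fin n, (f p - g p)
      = ((f j - g j) + (f k - g k)) := by
    rw [show (∑ p : Fin n, (f p - g p)) =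
        ∑ p : Fin n, (if p = j then f j - g j else if p = k then f k - g k else 0) from ?_,
      sum_two_aux hjk]
    refine Finset.sum_congr rfl fun p _ => ?_
    by_cases h1 : p = j
    · subst h1; simp
    · by_cases h2 : p = k
      · subst h2; simp [h1]
      · simp [h1, h2, h p h1 h2]
  rw [Finset.sum_sub_distrib] at key
  linarith

private lemma off_eq_total_sub_diag {n : ℕ} (f : Fin n → Fin n → ℝ) :
    (∑ p : Fin n, ∑ q : Fin n, if p ≠ q then f p q else 0)
      = (∑ p : Fin n, ∑ q : Fin n, f p q) - ∑ p : Fin n, f p p := by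
  rw [← Finset.sum_sub_distrib]
  refine Finset.sum_congr rfl fun p _ => ?_
  have : ∀ q : Fin n, (if p ≠ q then f p q else 0) = f p q - (if p = q then f p q else 0) := by
    intro q
    by_cases h : p = q <;> simp [h]
  rw [Finset.sum_congr rfl fun q _ => this q, Finset.sum_sub_distrib,
    Finset.sum_ite_eq Finset.univ p (f p)]
  simp

/-- One two-sided Jacobi step: if the rotation `J` in the `(j,k)` plane zeroes the
`(j,k)` entry of symmetric `A`, then `off(JᵀAJ)² = off(A)² − 2·A(j,k)²`. -/
theorem jacobi_step_off_norm {n : ℕ} (A : Matrix (Fin n) (Fin n) ℝ) (hA : Aᵀ = A)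
    (j k : Fin n) (hjk : j ≠ k) (c s : ℝ) (hcs : c ^ 2 + s ^ 2 = 1)
    (J : Matrix (Fin n) (Fin n) ℝ)
    (hJ : ∀ p q, J p q =
      if p = j ∧ q = j then c else if p = k ∧ q = k then c
      else if p = j ∧ q = k then s else if p = k ∧ q = j then -s
      else if p = q then 1 else 0)
    (hzero : (Jᵀ * A * J) j k = 0) :
    (∑ p : Fin n, ∑ q : Fin n, if p ≠ q then ((Jᵀ * A * J) p q) ^ 2 else 0) =
      (∑ p : Fin n, ∑ q : Fin n, if p ≠ q then (A p q) ^ 2 else 0) - 2 * (A j k) ^ 2 := by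
  classical
  set M : Matrix (Fin n) (Fin n) ℝ := A * J with hM
  set B : Matrix (Fin n) (Fin n) ℝ := Jᵀ * A * J with hB
  have hAsymm : ∀ p q, A q p = A p q := by
    intro p q
    conv_lhs => rw [← hA, transpose_apply]
  -- column entries of J
  have hJcol_j : ∀ b, J b j = if b = j then c else if b = k then -s else 0 := by
    intro b; rw [hJ]; split_ifs <;> simp_all
  have hJcol_k : ∀ b, J b k = if b = j then s else if b = k then c else 0 := by
    intro b; rw [hJ]; split_ifs <;> simp_all
  have hJcol_o : ∀ b q, q ≠ j → q ≠ k → J b q = if b = q then 1 else 0 := by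
    intro b q h1 h2; rw [hJ]; split_ifs <;> simp_all
  -- entries of M = A * J
  have hM_j : ∀ p, M p j = c * A p j - s * A p k := by
    intro p
    rw [hM, mul_apply]
    rw [Finset.sum_congr rfl (fun b _ => show A p b * J b j =
        if b = j then c * A p j else if b = k then (-s) * A p k else 0 from by
      rw [hJcol_j]; split_ifs with h1 h2 <;> [subst h1; subst h2; skip] <;> ring),
      sum_two_aux hjk]
    ring
  have hM_k : ∀ p, M p k = s * A p j + c * A p k := by
    intro p
    rw [hM, mul_apply]
    rw [Finset.sum_congr rfl (fun b _ => show A p b * J b k =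
        if b = j then s * A p j else if b = k then c * A p k else 0 from by
      rw [hJcol_k]; split_ifs with h1 h2 <;> [subst h1; subst h2; skip] <;> ring),
      sum_two_aux hjk]
  have hM_o : ∀ p q, q ≠ j → q ≠ k → M p q = A p q := by
    intro p q h1 h2
    rw [hM, mul_apply]
    rw [Finset.sum_congr rfl (fun b _ => show A p b * J b q =
        if b = q then A p q else 0 from by
      rw [hJcol_o b q h1 h2]; split_ifs with h3 <;> [subst h3; skip] <;> ring)]
    simp
  -- entries of B = Jᵀ * M
  have hBe : ∀ p q, B p q = ∑ a : Fin n, J a p * M a q := by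
    intro p q
    rw [hB, mul_assoc, ← hM, mul_apply]
    simp [transpose_apply]
  have hB_j : ∀ q, B j q = c * M j q - s * M k q := by
    intro q
    rw [hBe]
    rw [Finset.sum_congr rfl (fun a _ => show J a j * M a q =
        if a = j then c * M j q else if a = k then (-s) * M k q else 0 from by
      rw [hJcol_j]; split_ifs with h1 h2 <;> [subst h1; subst h2; skip] <;> ring),
      sum_two_aux hjk]
    ring
  have hB_k : ∀ q, B k q = s * M j q + c * M k q := by
    intro q
    rw [hBe]
    rw [Finset.sum_congr rfl (fun a _ => show J a k * M a q =
        if a = j then s * M j q else if a = k then c * M k q else 0 from by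
      rw [hJcol_k]; split_ifs with h1 h2 <;> [subst h1; subst h2; skip] <;> ring),
      sum_two_aux hjk]
  have hB_o : ∀ p q, p ≠ j → p ≠ k → B p q = M p q := by
    intro p q h1 h2
    rw [hBe]
    rw [Finset.sum_congr rfl (fun a _ => show J a p * M a q =
        if a = p then M p q else 0 from by
      rw [hJcol_o a p h1 h2]; split_ifs with h3 <;> [subst h3; skip] <;> ring)]
    simp
  -- total Frobenius norm squared is preserved
  have hrowM : ∀ p, (∑ q : Fin n, M p q ^ 2) = ∑ q : Fin n, A p q ^ 2 := by
    intro p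
    rw [sum_diff_two hjk (fun q => M p q ^ 2) (fun q => A p q ^ 2)
      (fun q h1 h2 => by show M p q ^ 2 = A p q ^ 2; rw [hM_o p q h1 h2])]
    rw [hM_j, hM_k]
    linear_combination (A p j ^ 2 + A p k ^ 2) * hcs
  have hcolB : ∀ q, (∑ p : Fin n, B p q ^ 2) = ∑ p : Fin n, M p q ^ 2 := by
    intro q
    rw [sum_diff_two hjk (fun p => B p q ^ 2) (fun p => M p q ^ 2)
      (fun p h1 h2 => by show B p q ^ 2 = M p q ^ 2; rw [hB_o p q h1 h2])]
    rw [hB_j, hB_k]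
    linear_combination (M j q ^ 2 + M k q ^ 2) * hcs
  have htotal : (∑ p : Fin n, ∑ q : Fin n, B p q ^ 2)
      = ∑ p : Fin n, ∑ q : Fin n, A p q ^ 2 := by
    rw [Finset.sum_comm]
    rw [Finset.sum_congr rfl (fun q _ => hcolB q), Finset.sum_comm]
    exact Finset.sum_congr rfl fun p _ => hrowM p
  -- the zeroed entries
  have hBjk : B j k = 0 := hzero
  -- diagonal sum
  have hBjj : B j j = c * (c * A j j - s * A j k) - s * (c * A j k - s * A k k) := by
    rw [hB_j, hM_j, hM_j, hAsymm j k]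
  have hBkk : B k k = s * (s * A j j + c * A j k) + c * (s * A j k + c * A k k) := by
    rw [hB_k, hM_k, hM_k, hAsymm j k]
  have hBjk' : B j k = c * (s * A j j + c * A j k) - s * (s * A j k + c * A k k) := by
    rw [hB_j, hM_k, hM_k, hAsymm j k]
  have hdiagkey : B j j ^ 2 + B k k ^ 2 = A j j ^ 2 + A k k ^ 2 + 2 * A j k ^ 2 := by
    have h0 : c * (s * A j j + c * A j k) - s * (s * A j k + c * A k k) = 0 := by
      rw [← hBjk', hBjk]
    rw [hBjj, hBkk]
    linear_combination ((c ^ 2 + s ^ 2 + 1) * (A j j ^ 2 + A k k ^ 2 + 2 * A j k ^ 2)) * hcs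
      - 2 * (c * (s * A j j + c * A j k) - s * (s * A j k + c * A k k)) * h0
  have hdiag : (∑ p : Fin n, B p p ^ 2) = (∑ p : Fin n, A p p ^ 2) + 2 * A j k ^ 2 := by
    rw [sum_diff_two hjk (fun p => B p p ^ 2) (fun p => A p p ^ 2)
      (fun p h1 h2 => by show B p p ^ 2 = A p p ^ 2; rw [hB_o p p h1 h2, hM_o p p h1 h2])]
    have := hdiagkey
    linarith
  -- assemble
  show (∑ p : Fin n, ∑ q : Fin n, if p ≠ q then B p q ^ 2 else 0)
      = (∑ p : Fin n, ∑ q : Fin n, if p ≠ q then A p q ^ 2 else 0) - 2 * A j k ^ 2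
  rw [off_eq_total_sub_diag (fun p q => B p q ^ 2),
    off_eq_total_sub_diag (fun p q => A p q ^ 2), htotal, hdiag]
  ring
end

section
/- Secular equation characterization: if λ is not equal to any diagonal entry dᵢ of D, then λ is an eigenvalue of D + ρuuᵀ if and only if f(λ) = 1 + ρ·Σᵢ uᵢ²/(dᵢ − λ) = 0. -/
open Matrix

/-- Secular equation characterization: for `λ` distinct from all `dᵢ` and `ρ ≠ 0`,
`λ` is an eigenvalue of `D + ρuuᵀ` iff `1 + ρ·Σᵢ uᵢ²/(dᵢ − λ) = 0`. -/
theorem secular_equation {n : ℕ} (d u : Fin n → ℝ) (ρ : ℝ) (hρ : ρ ≠ 0)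
    (lam : ℝ) (hlam : ∀ i, lam ≠ d i) :
    (∃ v : Fin n → ℝ, v ≠ 0 ∧
      (Matrix.diagonal d + ρ • Matrix.vecMulVec u u).mulVec v = lam • v) ↔
    1 + ρ * ∑ i, (u i) ^ 2 / (d i - lam) = 0 := by
  have hne : ∀ i, d i - lam ≠ 0 := fun i => sub_ne_zero.2 fun h => hlam i h.symm
  have key : ∀ v : Fin n → ℝ,
      (Matrix.diagonal d + ρ • Matrix.vecMulVec u u).mulVec v = lam • v ↔
      ∀ i, d i * v i + ρ * (u i * ∑ j, u j * v j) = lam * v i := by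
    intro v
    rw [funext_iff]
    refine forall_congr' fun i => ?_
    have hL : ((Matrix.diagonal d + ρ • Matrix.vecMulVec u u) *ᵥ v) i
        = d i * v i + ρ * (u i * ∑ j, u j * v j) := by
      simp [Matrix.mulVec, dotProduct, Matrix.add_apply, Matrix.diagonal_apply,
        Matrix.vecMulVec_apply, add_mul, Finset.sum_add_distrib, Finset.sum_ite_eq,
        Finset.mul_sum]
      exact Finset.sum_congr rfl fun x _ => by ring
    rw [hL, Pi.smul_apply, smul_eq_mul]
  constructor
  · rintro ⟨v, hv, hev⟩
    rw [key] at hev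
    have hcne : (∑ j, u j * v j) ≠ 0 := by
      intro h0
      apply hv
      funext i
      have h1 := hev i
      rw [h0, mul_zero, mul_zero, add_zero] at h1
      have h2 : (d i - lam) * v i = 0 := by linear_combination h1
      have h3 := (mul_eq_zero.mp h2).resolve_left (hne i)
      simpa using h3
    have hvi : ∀ i, v i = -(ρ * (∑ j, u j * v j)) * u i / (d i - lam) := by
      intro i
      rw [eq_div_iff (hne i)]
      linear_combination hev i
    have hsum : (∑ j, u j * v j)
        = -(ρ * (∑ j, u j * v j)) * ∑ i, u i ^ 2 / (d i - lam) := by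
      rw [Finset.mul_sum]
      refine Finset.sum_congr rfl fun i _ => ?_
      rw [hvi i]
      field_simp
    have h2 : (∑ j, u j * v j) * (1 + ρ * ∑ i, u i ^ 2 / (d i - lam)) = 0 := by
      linear_combination hsum
    exact (mul_eq_zero.mp h2).resolve_left hcne
  · intro hsec
    refine ⟨fun i => u i / (d i - lam), ?_, ?_⟩
    · intro h0
      have hu : ∀ i, u i = 0 := by
        intro i
        have := congrFun h0 i
        simpa [div_eq_zero_iff, hne i] using this
      simp [hu] at hsec
    · rw [key]
      intro i
      have hS : ∑ j, u j * (u j / (d j - lam)) = -1 / ρ := by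
        have h1 : ∑ j, u j * (u j / (d j - lam)) = ∑ j, u j ^ 2 / (d j - lam) := by
          refine Finset.sum_congr rfl fun j _ => by ring
        rw [h1]
        field_simp
        linarith [hsec]
      rw [hS]
      field_simp [hne i]
      ring
end

section
/- Interlacing for rank-one update, ρ < 0: if d₁ < d₂ < ... < dₙ and all uᵢ ≠ 0 and ρ < 0, then the eigenvalues λ₁ ≤ ... ≤ λₙ of D + ρuuᵀ satisfy λ₁ < d₁ < λ₂ < d₂ < ... < λₙ < dₙ. -/
open Matrix Polynomial

open Finset in
private lemma prod_pos_iff_even_card {N : ℕ} (s : Finset (Fin N)) (f : Fin N → ℝ)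
    (hf : ∀ i ∈ s, f i ≠ 0) :
    (0 < ∏ i ∈ s, f i) ↔ Even (s.filter fun i => f i < 0).card := by
  induction s using Finset.induction_on with
  | empty => simp
  | @insert a s ha ih =>
    have ih' := ih (fun i hi => hf i (Finset.mem_insert_of_mem hi))
    have hprod_ne : (∏ i ∈ s, f i) ≠ 0 :=
      Finset.prod_ne_zero_iff.mpr (fun i hi => hf i (Finset.mem_insert_of_mem hi))
    rw [Finset.prod_insert ha, Finset.filter_insert]
    by_cases h : f a < 0
    · rw [if_pos h, Finset.card_insert_of_notMem (by simp [ha]), Nat.even_add_one, ← ih']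
      rcases hprod_ne.lt_or_gt with hP | hP
      · exact iff_of_true (mul_pos_of_neg_of_neg h hP) (not_lt.mpr hP.le)
      · exact iff_of_false (not_lt.mpr (mul_nonpos_of_nonpos_of_nonneg h.le hP.le))
          (not_not.mpr hP)
    · have hpos : 0 < f a := (hf a (Finset.mem_insert_self a s)).lt_or_gt.resolve_left h
      rw [if_neg h, ← ih']
      constructor
      · intro h1
        nlinarith
      · intro h1
        exact mul_pos hpos h1

private lemma eval_charpoly' {N : ℕ} (M : Matrix (Fin N) (Fin N) ℝ) (x : ℝ) :
    (M.charpoly).eval x = (Matrix.diagonal (fun _ => x) - M).det := by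
  rw [Matrix.charpoly, ← Polynomial.coe_evalRingHom, RingHom.map_det]
  congr 1
  ext i j
  by_cases h : i = j <;>
    simp [Matrix.charmatrix_apply, Matrix.diagonal_apply, h, Matrix.sub_apply]

private lemma det_diag_sub_rank_one {N : ℕ} (v w : Fin N → ℝ) (ρ : ℝ) (k : Fin N)
    (hvk : v k = 0) (huk : w k ≠ 0) :
    (Matrix.diagonal v - ρ • Matrix.vecMulVec w w).det
      = -(ρ * w k) * (w k * ∏ j ∈ Finset.univ.erase k, v j) := by
  set T := Matrix.diagonal v - ρ • Matrix.vecMulVec w w with hT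
  have hrow : T k = (-(ρ * w k)) • w := by
    funext j
    simp only [hT, Matrix.sub_apply, Matrix.smul_apply, Matrix.vecMulVec_apply,
      Matrix.diagonal_apply, Pi.smul_apply, smul_eq_mul]
    by_cases h : k = j
    · subst h; simp [hvk]; ring
    · simp [h]; ring
  have step1 : T.det = -(ρ * w k) * (T.updateRow k w).det := by
    conv_lhs => rw [← Matrix.updateRow_eq_self T k, hrow]
    exact Matrix.det_updateRow_smul T k _ w
  have step2 : (T.updateRow k w).det = ((Matrix.diagonal v).updateRow k w).det := by
    apply Matrix.det_eq_of_forall_row_eq_smul_add_const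
      (fun i => if i = k then 0 else -(ρ * w i)) k (by simp)
    intro i j
    by_cases hik : i = k
    · subst hik; simp [Matrix.updateRow_apply]
    · rw [Matrix.updateRow_ne hik, Matrix.updateRow_ne hik]
      have h3 : ((Matrix.diagonal v).updateRow k w) k j = w j := by
        rw [Matrix.updateRow_self]
      rw [h3, if_neg hik, hT]
      simp only [Matrix.sub_apply, Matrix.smul_apply, Matrix.vecMulVec_apply, smul_eq_mul]
      ring
  have step3 : ((Matrix.diagonal v).updateRow k w).det
      = (Matrix.diagonal (fun j => if j = k then w k else v j)).det := by
    rw [← Matrix.det_transpose ((Matrix.diagonal v).updateRow k w)]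
    apply Matrix.det_eq_of_forall_row_eq_smul_add_const
      (fun j => if j = k then 0 else w j / w k) k (by simp)
    intro j i
    rcases eq_or_ne j k with hjk | hjk
    · subst hjk
      rcases eq_or_ne i j with hij | hij
      · subst hij; simp
      · simp [Matrix.updateRow_apply, hij, Ne.symm hij]
    · rcases eq_or_ne i k with hik | hik
      · subst hik
        simp [Matrix.updateRow_apply, hjk, Ne.symm hjk, div_mul_cancel₀ _ huk]
      · rcases eq_or_ne i j with hij | hij
        · subst hij
          simp [Matrix.updateRow_apply, hik, hjk]
          exact Or.inr (Matrix.diagonal_apply_ne _ (Ne.symm hik))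
        · simp [Matrix.updateRow_apply, hik, hjk, hij, Ne.symm hij]
          exact Or.inr (Matrix.diagonal_apply_ne _ (Ne.symm hik))
  have step4 : (Matrix.diagonal (fun j => if j = k then w k else v j)).det
      = w k * ∏ j ∈ Finset.univ.erase k, v j := by
    rw [Matrix.det_diagonal, ← Finset.mul_prod_erase Finset.univ _ (Finset.mem_univ k)]
    simp only [if_pos rfl]
    congr 1
    exact Finset.prod_congr rfl (fun j hj => if_neg (Finset.mem_erase.mp hj).1)
  rw [step1, step2, step3, step4]

/-- Interlacing for a negative rank-one update: if `d₁ < ... < dₙ`, all `uᵢ ≠ 0` and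
`ρ < 0`, the eigenvalues `λ₁ ≤ ... ≤ λₙ` of `D + ρuuᵀ` satisfy
`λ₁ < d₁ < λ₂ < d₂ < ... < λₙ < dₙ`. -/
theorem interlacing_rank_one_neg {n : ℕ} (d u : Fin n → ℝ)
    (hd : StrictMono d) (hu : ∀ i, u i ≠ 0) (ρ : ℝ) (hρ : ρ < 0)
    (lam : Fin n → ℝ) (hmono : Monotone lam)
    (hchar : (Matrix.diagonal d + ρ • Matrix.vecMulVec u u).charpoly =
      ∏ i, (X - C (lam i))) :
    (∀ i, lam i < d i) ∧
    (∀ i j : Fin n, (i : ℕ) + 1 = (j : ℕ) → d i < lam j) := by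
  classical
  set A := Matrix.diagonal d + ρ • Matrix.vecMulVec u u with hA
  -- the evaluation of the characteristic polynomial at d k, two ways
  have hdetform : ∀ k : Fin n, (A.charpoly).eval (d k)
      = -(ρ * u k) * (u k * ∏ j ∈ Finset.univ.erase k, (d k - d j)) := by
    intro k
    rw [eval_charpoly']
    have hmat : Matrix.diagonal (fun _ => d k) - A
        = Matrix.diagonal (fun j => d k - d j) - ρ • Matrix.vecMulVec u u := by
      rw [hA]
      ext i j
      by_cases h : i = j
      · simp [Matrix.sub_apply, Matrix.add_apply, Matrix.diagonal_apply, h,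
          Matrix.smul_apply, Matrix.vecMulVec_apply]
        ring
      · simp [Matrix.sub_apply, Matrix.add_apply, Matrix.diagonal_apply, h,
          Matrix.smul_apply, Matrix.vecMulVec_apply]
    rw [hmat, det_diag_sub_rank_one _ u ρ k (by simp) (hu k)]
  have hprodform : ∀ k : Fin n, (A.charpoly).eval (d k) = ∏ i, (d k - lam i) := by
    intro k
    rw [hchar]
    simp [eval_prod]
  -- each lam i differs from each d k
  have hQne : ∀ k : Fin n, (∏ j ∈ Finset.univ.erase k, (d k - d j)) ≠ 0 := by
    intro k
    refine Finset.prod_ne_zero_iff.mpr fun j hj => sub_ne_zero.mpr ?_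
    exact fun h => (Finset.mem_erase.mp hj).1 (hd.injective h).symm
  have hne : ∀ (k i : Fin n), d k - lam i ≠ 0 := by
    intro k i
    have hp : (∏ i, (d k - lam i)) ≠ 0 := by
      rw [← hprodform k, hdetform k]
      exact mul_ne_zero (by simp [hu k]; intro h; exact absurd h hρ.ne)
        (mul_ne_zero (hu k) (hQne k))
    exact Finset.prod_ne_zero_iff.mp hp i (Finset.mem_univ i)
  -- the sign of the product ∏ (d k - lam i)
  have hcpos : ∀ k : Fin n, 0 < -(ρ * u k) * u k := by
    intro k
    have h2 : (0:ℝ) < u k ^ 2 := pow_two_pos_of_ne_zero (hu k)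
    nlinarith
  have hQfilter : ∀ k : Fin n,
      ((Finset.univ.erase k).filter fun j => d k - d j < 0) = Finset.Ioi k := by
    intro k
    ext j
    simp only [Finset.mem_filter, Finset.mem_erase, Finset.mem_univ, true_and,
      Finset.mem_Ioi, sub_neg, hd.lt_iff_lt, and_true]
    exact ⟨fun h => h.2, fun h => ⟨h.ne', h⟩⟩
  set m : Fin n → ℕ := fun k => ((Finset.univ.filter fun i => d k < lam i).card) with hm
  have hpar : ∀ k : Fin n, m k % 2 = (n - 1 - (k : ℕ)) % 2 := by
    intro k
    have h1 : (0 < ∏ i, (d k - lam i)) ↔ Even (m k) := by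
      rw [hm]
      have := prod_pos_iff_even_card Finset.univ (fun i => d k - lam i)
        (fun i _ => hne k i)
      rw [this]
      congr! 2
      ext i
      simp [sub_neg]
    have h2 : (0 < ∏ i, (d k - lam i)) ↔ Even (n - 1 - (k : ℕ)) := by
      rw [← hprodform k, hdetform k, ← mul_assoc, mul_pos_iff_of_pos_left (hcpos k)]
      rw [prod_pos_iff_even_card _ _ (fun j hj => sub_ne_zero.mpr
        (fun h => (Finset.mem_erase.mp hj).1 (hd.injective h).symm))]
      rw [hQfilter k, Fin.card_Ioi]
    have h3 := h1.symm.trans h2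
    rw [Nat.even_iff, Nat.even_iff] at h3
    omega
  have hmle : ∀ k : Fin n, m k ≤ n := by
    intro k
    calc m k ≤ (Finset.univ : Finset (Fin n)).card := Finset.card_filter_le _ _
    _ = n := by simp
  have hstep : ∀ (j : ℕ) (hj1 : j + 1 < n),
      m ⟨j + 1, hj1⟩ < m ⟨j, Nat.lt_of_succ_lt hj1⟩ := by
    intro j hj1
    have hle : m ⟨j + 1, hj1⟩ ≤ m ⟨j, Nat.lt_of_succ_lt hj1⟩ := by
      apply Finset.card_le_card
      intro i hi
      simp only [Finset.mem_filter, Finset.mem_univ, true_and] at hi ⊢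
      have : d ⟨j, Nat.lt_of_succ_lt hj1⟩ < d ⟨j + 1, hj1⟩ := hd (by simp [Fin.lt_def])
      linarith
    have p1 := hpar ⟨j + 1, hj1⟩
    have p2 := hpar ⟨j, Nat.lt_of_succ_lt hj1⟩
    simp only [Fin.val_mk] at p1 p2
    omega
  have claimA : ∀ (j : ℕ) (hj : j < n), m ⟨j, hj⟩ + j + 1 ≤ n := by
    intro j
    induction j with
    | zero =>
      intro hj
      have := hpar ⟨0, hj⟩
      have := hmle ⟨0, hj⟩
      simp only [Fin.val_mk] at *
      omega
    | succ j ih =>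
      intro hj
      have h1 := ih (Nat.lt_of_succ_lt hj)
      have h2 := hstep j hj
      omega
  have claimB : ∀ (t j : ℕ) (hj : j < n), j + t + 1 = n → n ≤ m ⟨j, hj⟩ + j + 1 := by
    intro t
    induction t with
    | zero => intro j hj hjn; omega
    | succ t ih =>
      intro j hj hjn
      have hj1 : j + 1 < n := by omega
      have h1 := ih (j + 1) hj1 (by omega)
      have h2 := hstep j hj1
      omega
  have hmval : ∀ k : Fin n, m k + (k : ℕ) + 1 = n := by
    intro k
    have hk := k.isLt
    have h1 := claimA k hk
    have h2 := claimB (n - (k : ℕ) - 1) k hk (by omega)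
    have h3 : (⟨(k : ℕ), hk⟩ : Fin n) = k := Fin.ext rfl
    rw [h3] at h1 h2
    omega
  constructor
  · intro k
    by_contra hcon
    push_neg at hcon
    have hdk : d k < lam k := lt_of_le_of_ne hcon (fun h => hne k k (by rw [h]; ring))
    have hsub : Finset.Ici k ⊆ Finset.univ.filter fun i => d k < lam i := by
      intro i hi
      simp only [Finset.mem_filter, Finset.mem_univ, true_and]
      exact lt_of_lt_of_le hdk (hmono (Finset.mem_Ici.mp hi))
    have hcard : n - (k : ℕ) ≤ m k := by
      rw [hm, ← Fin.card_Ici]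
      exact Finset.card_le_card hsub
    have := hmval k
    have hk := k.isLt
    omega
  · intro i j hij
    by_contra hcon
    push_neg at hcon
    have hsub : (Finset.univ.filter fun l => d i < lam l) ⊆ Finset.Ioi j := by
      intro l hl
      simp only [Finset.mem_filter, Finset.mem_univ, true_and] at hl
      rw [Finset.mem_Ioi]
      by_contra hlj
      push_neg at hlj
      exact absurd (lt_of_lt_of_le hl (le_trans (hmono hlj) hcon)) (lt_irrefl _)
    have hcard : m i ≤ n - 1 - (j : ℕ) := by
      rw [hm, ← Fin.card_Ioi]
      exact Finset.card_le_card hsub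
    have := hmval i
    have hj := j.isLt
    omega
end
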